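/- Let λ be a singular strong limit cardinal and κ ≤ λ with cf(κ) ≤ cf(λ). Then there is no weakly (λ,κ)-universal graph, i.e., no graph on λ with no κ-clique weakly embedding every graph on λ with no κ-clique. -/

import Mathlib

open Cardinal Ordinal Set

universe u

namespace Stmt4Aux

/-- A family of fewer than `cof o` elements of `o.ToType` is bounded. -/
lemma exists_bound {o : Ordinal.{u}} {ι : Type u} (hι : #ι < o.cof)
    (g : ι → o.ToType) : ∃ b : o.ToType, ∀ i, g i < b := by
  let e := Ordinal.ToType.mk (o := o)
  have h1 : ∀ i, ((e.symm (g i) : Iio o) : Ordinal) < o := fun i => (e.symm (g i)).2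
  have hl : Ordinal.lsub (fun i => ((e.symm (g i) : Iio o) : Ordinal)) < o :=
    Ordinal.lsub_lt_ord hι h1
  refine ⟨e ⟨_, hl⟩, fun i => ?_⟩
  have h2 : (e.symm (g i)) < (⟨_, hl⟩ : Iio o) := by
    have := Ordinal.lt_lsub (fun i => ((e.symm (g i) : Iio o) : Ordinal)) i
    exact this
  calc g i = e (e.symm (g i)) := by simp
    _ < e ⟨_, hl⟩ := by rwa [OrderIso.lt_iff_lt]

lemma exists_gt {o : Ordinal.{u}} (ho : Order.IsSuccLimit o) (x : o.ToType) :
    ∃ b : o.ToType, x < b := by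
  have h1 : (#(PUnit.{u+1}) : Cardinal) < o.cof := by
    have : ℵ₀ ≤ o.cof := Ordinal.aleph0_le_cof.2 ho
    have h2 : (#(PUnit.{u+1}) : Cardinal) = 1 := by simp
    rw [h2]; exact lt_of_lt_of_le one_lt_aleph0 this
  obtain ⟨b, hb⟩ := exists_bound h1 (fun _ : PUnit => x)
  exact ⟨b, hb PUnit.unit⟩

/-- sup of fewer than `cof c.ord` many cardinals `< c` is `< c`. -/
lemma iSup_lt_of_cof {c : Cardinal.{u}} {ι : Type u} (hι : #ι < c.ord.cof)
    (g : ι → Cardinal.{u}) (h : ∀ i, g i < c) : (⨆ i, g i) < c := by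
  cases isEmpty_or_nonempty ι with
  | inl hε =>
    have h0 : (⨆ i, g i) = 0 := by
      rw [ciSup_of_empty]; rfl
    rw [h0]
    rcases eq_or_ne c 0 with rfl | hc
    · rw [Cardinal.ord_zero, Ordinal.cof_zero] at hι
      simp at hι
    · exact pos_iff_ne_zero.2 hc
  | inr hne =>
    have h1 : ∀ i, (g i).ord < c.ord := fun i => Cardinal.ord_lt_ord.2 (h i)
    have hl : Ordinal.lsub (fun i => (g i).ord) < c.ord := Ordinal.lsub_lt_ord hι h1
    have h2 : ∀ i, g i ≤ (Ordinal.lsub (fun i => (g i).ord)).card := by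
      intro i
      have := le_of_lt (Ordinal.lt_lsub (fun i => (g i).ord) i)
      calc g i = (g i).ord.card := (Cardinal.card_ord _).symm
        _ ≤ _ := Ordinal.card_le_card this
    exact lt_of_le_of_lt (ciSup_le h2) (Cardinal.lt_ord.1 hl)

/-- sum of fewer than `cof c.ord` many cardinals `< c` is `< c`, `c` infinite. -/
lemma sum_lt_of_cof {c : Cardinal.{u}} (hc : ℵ₀ ≤ c) {ι : Type u} (hι : #ι < c.ord.cof)
    (g : ι → Cardinal.{u}) (h : ∀ i, g i < c) : Cardinal.sum g < c := by
  have h1 : Cardinal.sum g ≤ #ι * (⨆ i, g i) := by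
    calc Cardinal.sum g ≤ Cardinal.sum (fun _ : ι => ⨆ i, g i) :=
        Cardinal.sum_le_sum _ _ (fun i => le_ciSup (Cardinal.bddAbove_range _) i)
      _ = #ι * (⨆ i, g i) := Cardinal.sum_const' _ _
  have hιc : #ι < c := lt_of_lt_of_le hι (Ordinal.cof_ord_le c)
  exact lt_of_le_of_lt h1 (Cardinal.mul_lt_of_lt hc hιc (iSup_lt_of_cof hι g h))

/-- subsets of a set W are at most 2^#W many -/
lemma mk_subsets_le {V : Type u} (W : Set V) :
    #{A : Set V // A ⊆ W} ≤ (2 : Cardinal.{u}) ^ #W := by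
  rw [← Cardinal.mk_set]
  refine Cardinal.mk_le_of_injective
    (f := fun A : {A : Set V // A ⊆ W} => (fun w : W => (w : V) ∈ A.1)) ?_
  rintro ⟨A, hA⟩ ⟨B, hB⟩ h
  apply Subtype.ext
  ext v
  constructor
  · intro hv
    have h' := congrFun h ⟨v, hA hv⟩
    simp only at h'
    exact h' ▸ hv
  · intro hv
    have h' := congrFun h ⟨v, hB hv⟩
    simp only at h'
    exact h'.symm ▸ hv

/-- strong limit λ : λ ^ θ ≤ λ for θ < cof -/
lemma pow_le_of_lt_cof {lam θ : Cardinal.{u}} (hsl : lam.IsStrongLimit)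
    (hθ : θ < lam.ord.cof) : lam ^ θ ≤ lam := by
  have hlaminf : ℵ₀ ≤ lam := hsl.aleph0_le
  set O := lam.ord.ToType with hO
  have hmkO : #O = lam := by rw [Cardinal.mk_toType, Cardinal.card_ord]
  set Θ := θ.ord.ToType with hΘ
  have hmkΘ : #Θ = θ := by rw [Cardinal.mk_toType, Cardinal.card_ord]
  have key : lam ^ θ = #(Θ → O) := by
    rw [← hmkO, ← hmkΘ, Cardinal.power_def]
  rw [key]
  have hbdd : ∀ g : Θ → O, ∃ b : O, ∀ i, g i < b := by
    intro g
    refine exists_bound ?_ g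
    rwa [hmkΘ]
  classical
  let Φ : (Θ → O) → Σ b : O, (Θ → Iio b) := fun g =>
    ⟨Classical.choose (hbdd g), fun i => ⟨g i, Classical.choose_spec (hbdd g) i⟩⟩
  have hΦ : Function.Injective Φ := by
    intro g g' h
    have h2 := congrArg (fun p : Σ b : O, (Θ → Iio b) => fun i => ((p.2 i : O))) h
    exact h2
  have hle : #(Θ → O) ≤ #(Σ b : O, (Θ → Iio b)) := Cardinal.mk_le_of_injective hΦ
  refine le_trans hle ?_
  rw [Cardinal.mk_sigma]
  have hterm : ∀ b : O, #(Θ → Iio b) ≤ lam := by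
    intro b
    have h1 : #(Iio b) < lam := Cardinal.mk_Iio_ord_toType b
    have h2 : #(Θ → Iio b) = (#(Iio b)) ^ θ := by rw [← hmkΘ, Cardinal.power_def]
    rw [h2]
    have h3 : (#(Iio b)) ^ θ ≤ (2 ^ #(Iio b)) ^ θ :=
      Cardinal.power_le_power_right (Cardinal.cantor _).le
    have h4 : (2 ^ #(Iio b) : Cardinal) ^ θ = 2 ^ (#(Iio b) * θ) := by
      rw [← Cardinal.power_mul]
    have h5 : #(Iio b) * θ < lam := by
      apply Cardinal.mul_lt_of_lt hlaminf h1
      exact lt_of_lt_of_le hθ (Ordinal.cof_ord_le lam)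
    have h6 : (2 : Cardinal) ^ (#(Iio b) * θ) < lam := hsl.two_power_lt h5
    exact le_trans h3 (le_of_lt (by rw [h4]; exact h6))
  calc Cardinal.sum (fun b : O => #(Θ → Iio b)) ≤ Cardinal.sum (fun _ : O => lam) :=
        Cardinal.sum_le_sum _ _ hterm
    _ = #O * lam := Cardinal.sum_const' _ _
    _ = lam := by rw [hmkO, Cardinal.mul_eq_self hlaminf]

/-- successor of a cardinal below a singular cardinal stays below -/
lemma succ_lt_of_singular {kappa x : Cardinal.{u}} (hk : ℵ₀ ≤ kappa)
    (hsing : kappa.ord.cof < kappa) (hx : x < kappa) : Order.succ x < kappa := by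
  rcases lt_or_ge x ℵ₀ with hfin | hinf
  · have h1 : Order.succ x ≤ ℵ₀ := Order.succ_le_of_lt hfin
    rcases lt_or_eq_of_le h1 with h | h
    · exact lt_of_lt_of_le h hk
    · rcases lt_or_eq_of_le hk with h2 | h2
      · rwa [h]
      · exfalso
        rw [← h2] at hsing
        rw [Cardinal.isRegular_aleph0.cof_eq] at hsing
        exact lt_irrefl _ hsing
  · have hsucc : Order.succ x ≤ kappa := Order.succ_le_of_lt hx
    rcases lt_or_eq_of_le hsucc with h | h
    · exact h
    · exfalso
      have hreg : (Order.succ x).IsRegular := Cardinal.isRegular_succ hinf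
      rw [h] at hreg
      rw [hreg.cof_eq] at hsing
      exact lt_irrefl _ hsing


section Main
variable {V : Type u} {lam kappa : Cardinal.{u}}

lemma exists_rho (lam kappa : Cardinal.{u}) (hkappa : ℵ₀ ≤ kappa)
    (hcf : kappa.ord.cof ≤ lam.ord.cof) :
    ∃ ρ : (kappa.ord.cof).ord.ToType → Cardinal.{u},
      (∀ x, ρ x < kappa) ∧ (∀ x, Order.succ (ρ x) < kappa) ∧
      (kappa ≤ (kappa.ord.cof) ⊔ (⨆ x, ρ x)) ∧
      ((kappa ≤ lam.ord.cof) ∨ (∀ x, lam.ord.cof < ρ x)) := by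
  set ν := kappa.ord.cof with hν
  set μ := lam.ord.cof with hμ
  have hκord : Order.IsSuccLimit kappa.ord := Cardinal.isSuccLimit_ord hkappa
  have hνinf : ℵ₀ ≤ ν := Ordinal.aleph0_le_cof.2 hκord
  have hνκ : ν ≤ kappa := Ordinal.cof_ord_le kappa
  rcases lt_or_eq_of_le hνκ with hsingκ | hregκ
  swap
  · refine ⟨fun _ => 0, fun _ => lt_of_lt_of_le aleph0_pos hkappa, ?_, ?_, Or.inl ?_⟩
    · intro x
      have h1 : Order.succ (0 : Cardinal.{u}) = 1 := by simp
      rw [h1]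
      exact lt_of_lt_of_le one_lt_aleph0 hkappa
    · rw [hregκ]; exact le_sup_left
    · rw [← hregκ]; exact hcf
  · obtain ⟨ι, f, hlsub, hmkι⟩ := Ordinal.exists_lsub_cof kappa.ord
    have hmkΛ : #(ν.ord.ToType) = ν := by rw [Cardinal.mk_toType, Cardinal.card_ord]
    obtain ⟨e⟩ : Nonempty (ν.ord.ToType ≃ ι) := Cardinal.eq.1 (by rw [hmkΛ, hmkι])
    have hflt : ∀ i, f i < kappa.ord := by
      intro i; rw [← hlsub]; exact Ordinal.lt_lsub f i
    have hcard : ∀ i, (f i).card < kappa := fun i => Cardinal.lt_ord.1 (hflt i)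
    have hsupkey : ∀ (ρ : ν.ord.ToType → Cardinal.{u}),
        (∀ x, (f (e x)).card ≤ ρ x) → (∀ x, ρ x < kappa) → kappa ≤ ⨆ x, ρ x := by
      intro ρ hlow hhigh
      by_contra hcon
      push_neg at hcon
      set s := ⨆ x, ρ x with hs
      have hc : Order.succ s < kappa := succ_lt_of_singular hkappa hsingκ hcon
      have hco : (Order.succ s).ord < kappa.ord := Cardinal.ord_lt_ord.2 hc
      rw [← hlsub] at hco
      rw [Ordinal.lt_lsub_iff] at hco
      obtain ⟨i, hi⟩ := hco
      have h1 : Order.succ s ≤ (f i).card := by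
        calc Order.succ s = (Order.succ s).ord.card := (Cardinal.card_ord _).symm
          _ ≤ (f i).card := Ordinal.card_le_card hi
      have h2 : (f i).card ≤ ρ (e.symm i) := by
        have := hlow (e.symm i)
        rwa [Equiv.apply_symm_apply] at this
      have h3 : ρ (e.symm i) ≤ s := le_ciSup (Cardinal.bddAbove_range _) _
      have : Order.succ s ≤ s := h1.trans (h2.trans h3)
      exact absurd this (not_le.2 (Order.lt_succ_of_not_isMax (not_isMax s)))
    rcases le_or_gt kappa μ with hκμ | hμκ
    · refine ⟨fun x => (f (e x)).card ⊔ ℵ₀, ?_, ?_, ?_, Or.inl hκμ⟩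
      · intro x
        exact sup_lt_iff.2 ⟨hcard _, lt_of_le_of_lt hνinf hsingκ⟩
      · intro x
        exact succ_lt_of_singular hkappa hsingκ
          (sup_lt_iff.2 ⟨hcard _, lt_of_le_of_lt hνinf hsingκ⟩)
      · refine le_trans (hsupkey _ (fun x => le_sup_left) ?_) le_sup_right
        intro x
        exact sup_lt_iff.2 ⟨hcard _, lt_of_le_of_lt hνinf hsingκ⟩
    · have hμκ' : Order.succ μ < kappa :=
        succ_lt_of_singular hkappa hsingκ hμκ
      refine ⟨fun x => (f (e x)).card ⊔ Order.succ μ, ?_, ?_, ?_, Or.inr ?_⟩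
      · intro x
        exact sup_lt_iff.2 ⟨hcard _, hμκ'⟩
      · intro x
        exact succ_lt_of_singular hkappa hsingκ (sup_lt_iff.2 ⟨hcard _, hμκ'⟩)
      · refine le_trans (hsupkey _ (fun x => le_sup_left) ?_) le_sup_right
        intro x
        exact sup_lt_iff.2 ⟨hcard _, hμκ'⟩
      · intro x
        exact lt_of_lt_of_le (Order.lt_succ_of_not_isMax (not_isMax μ)) le_sup_right


/-- the "no long increasing chain of cliques" lemma -/
lemma no_branch (X : SimpleGraph V)
    (hX : ¬∃ s : Set V, X.IsClique s ∧ #s = kappa) (hkappa : ℵ₀ ≤ kappa)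
    (ρ : (kappa.ord.cof).ord.ToType → Cardinal.{u})
    (hsup : kappa ≤ kappa.ord.cof ⊔ ⨆ x, ρ x)
    (m : (kappa.ord.cof).ord.ToType → Set V)
    (hcl : ∀ x, X.IsClique (m x)) (hsz : ∀ x, ρ x ≤ #(m x))
    (hmono : ∀ x y, x < y → m x ⊂ m y) : False := by
  classical
  have hκord : Order.IsSuccLimit kappa.ord := Cardinal.isSuccLimit_ord hkappa
  have hνinf : ℵ₀ ≤ kappa.ord.cof := Ordinal.aleph0_le_cof.2 hκord
  have hνord : Order.IsSuccLimit (kappa.ord.cof).ord := Cardinal.isSuccLimit_ord hνinf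
  have hmkΛ : #((kappa.ord.cof).ord.ToType) = kappa.ord.cof := by rw [Cardinal.mk_toType, Cardinal.card_ord]
  have hmonole : ∀ x y : (kappa.ord.cof).ord.ToType, x ≤ y → m x ⊆ m y := by
    intro x y hxy
    rcases lt_or_eq_of_le hxy with h | h
    · exact (hmono x y h).subset
    · rw [h]
  set K := ⋃ x : (kappa.ord.cof).ord.ToType, m x with hK
  have hKcl : X.IsClique K := by
    intro u hu v hv huv
    obtain ⟨x, hx⟩ : ∃ x, u ∈ m x := by simpa [hK] using hu
    obtain ⟨y, hy⟩ : ∃ y, v ∈ m y := by simpa [hK] using hv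
    have h1 : u ∈ m (max x y) := hmonole _ _ (le_max_left _ _) hx
    have h2 : v ∈ m (max x y) := hmonole _ _ (le_max_right _ _) hy
    exact hcl (max x y) h1 h2 huv
  -- ν ≤ #K via picking fresh points
  have hνK : kappa.ord.cof ≤ #K := by
    have hsucc : ∀ x : (kappa.ord.cof).ord.ToType, ∃ y, x < y := fun x => exists_gt hνord x
    let nxt := fun x : (kappa.ord.cof).ord.ToType => WellFounded.min (IsWellFounded.wf (α := (kappa.ord.cof).ord.ToType) (r := (· < ·)))
      {y | x < y} (by obtain ⟨y, hy⟩ := hsucc x; exact ⟨y, hy⟩)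
    have hnxt : ∀ x, x < nxt x := fun x =>
      WellFounded.min_mem _ {y | x < y} _
    have hnxtle : ∀ x y, x < y → nxt x ≤ y := by
      intro x y h
      by_contra hcon
      push_neg at hcon
      exact WellFounded.not_lt_min _ {y | x < y} h hcon
    have hfresh : ∀ x : (kappa.ord.cof).ord.ToType, ∃ v, v ∈ m (nxt x) ∧ v ∉ m x := by
      intro x
      obtain ⟨v, hv1, hv2⟩ := exists_of_ssubset (hmono x (nxt x) (hnxt x))
      exact ⟨v, hv1, hv2⟩
    let w : (kappa.ord.cof).ord.ToType → V := fun x => Classical.choose (hfresh x)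
    have hw1 : ∀ x, w x ∈ m (nxt x) := fun x => (Classical.choose_spec (hfresh x)).1
    have hw2 : ∀ x, w x ∉ m x := fun x => (Classical.choose_spec (hfresh x)).2
    have hwK : ∀ x, w x ∈ K := fun x => Set.mem_iUnion.2 ⟨nxt x, hw1 x⟩
    have hinj : Function.Injective (fun x : (kappa.ord.cof).ord.ToType => (⟨w x, hwK x⟩ : K)) := by
      intro x y hxy
      simp only [Subtype.mk.injEq] at hxy
      by_contra hne
      rcases lt_or_gt_of_ne hne with h | h
      · have : w x ∈ m y := hmonole _ _ (hnxtle _ _ h) (hw1 x)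
        rw [hxy] at this
        exact hw2 y this
      · have : w y ∈ m x := hmonole _ _ (hnxtle _ _ h) (hw1 y)
        rw [← hxy] at this
        exact hw2 x this
    calc kappa.ord.cof = #((kappa.ord.cof).ord.ToType) := hmkΛ.symm
      _ ≤ #K := Cardinal.mk_le_of_injective hinj
  have hρK : ∀ x, ρ x ≤ #K := by
    intro x
    exact le_trans (hsz x) (Cardinal.mk_le_mk_of_subset (Set.subset_iUnion m x))
  have hne : Nonempty ((kappa.ord.cof).ord.ToType) := by
    rw [Ordinal.nonempty_toType_iff]
    intro h0
    rw [Cardinal.ord_eq_zero] at h0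
    rw [h0] at hνinf
    exact absurd hνinf (by simp [aleph0_pos.ne'])
  have hκK : kappa ≤ #K := by
    refine le_trans hsup ?_
    exact max_le hνK (ciSup_le hρK)
  rw [Cardinal.le_mk_iff_exists_set] at hκK
  obtain ⟨p, hp⟩ := hκK
  refine hX ⟨Subtype.val '' p, ?_, ?_⟩
  · exact hKcl.subset (by rintro v ⟨⟨v', hv'⟩, -, rfl⟩; exact hv')
  · rw [Cardinal.mk_image_eq Subtype.val_injective, hp]



def Node (ordV : V ≃ lam.ord.ToType) : Type u :=
  Σ _b : lam.ord.ToType, {A : Set V // ∀ v ∈ A, ordV v < _b}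

def Tt (kappa : Cardinal.{u}) (ordV : V ≃ lam.ord.ToType) : Type u :=
  Σ d : (kappa.ord.cof).ord.ToType,
    ({y : (kappa.ord.cof).ord.ToType // y < d} → Node ordV)

variable (ordV : V ≃ lam.ord.ToType)

abbrev nodeA (nd : Node ordV) : Set V := nd.2.1

def leT (u u' : Tt kappa ordV) : Prop :=
  ∃ h : u.1 ≤ u'.1, ∀ (y : (kappa.ord.cof).ord.ToType) (hy : y < u.1),
    u.2 ⟨y, hy⟩ = u'.2 ⟨y, lt_of_lt_of_le hy h⟩

lemma leT_refl (u : Tt kappa ordV) : leT ordV u u := ⟨le_refl _, fun _ _ => rfl⟩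

lemma leT_ext {u u' : Tt kappa ordV} (h : leT ordV u u') (hd : u.1 = u'.1) :
    u = u' := by
  obtain ⟨d, g⟩ := u
  obtain ⟨d', g'⟩ := u'
  simp only at hd
  subst hd
  obtain ⟨h1, h2⟩ := h
  congr 1
  funext y
  obtain ⟨yv, hy⟩ := y
  exact h2 yv hy

def GOOD (X : SimpleGraph V) (ρ : (kappa.ord.cof).ord.ToType → Cardinal.{u})
    (u : Tt kappa ordV) : Prop :=
  (∀ y : {y : (kappa.ord.cof).ord.ToType // y < u.1},
      X.IsClique (nodeA ordV (u.2 y)) ∧ ρ y.1 ≤ #(nodeA ordV (u.2 y))) ∧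
  (∀ y z : {y : (kappa.ord.cof).ord.ToType // y < u.1},
      (y : (kappa.ord.cof).ord.ToType) < (z : _) →
      nodeA ordV (u.2 y) ⊂ nodeA ordV (u.2 z))

abbrev fib (ρ : (kappa.ord.cof).ord.ToType → Cardinal.{u}) (u : Tt kappa ordV) :
    Type u := (Order.succ (ρ u.1)).ord.ToType

abbrev Idx (ρ : (kappa.ord.cof).ord.ToType → Cardinal.{u}) : Type u :=
  Σ u : Tt kappa ordV, fib ordV ρ u

def G0 (X : SimpleGraph V) (ρ : (kappa.ord.cof).ord.ToType → Cardinal.{u}) :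
    SimpleGraph (Idx ordV ρ) where
  Adj p q := p ≠ q ∧ (leT ordV p.1 q.1 ∨ leT ordV q.1 p.1) ∧
    (p.1 ≠ q.1 → GOOD ordV X ρ p.1 ∧ GOOD ordV X ρ q.1)
  symm := by
    constructor
    rintro p q ⟨h1, h2, h3⟩
    exact ⟨h1.symm, h2.symm, fun hne => (h3 (Ne.symm hne)).symm⟩
  loopless := ⟨fun p h => h.1 rfl⟩


section CliqueFree

variable (X : SimpleGraph V) (ρ : (kappa.ord.cof).ord.ToType → Cardinal.{u})

lemma chain_unbounded_false
    (hX : ¬∃ s : Set V, X.IsClique s ∧ #s = kappa) (hkappa : ℵ₀ ≤ kappa)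
    (hsup : kappa ≤ kappa.ord.cof ⊔ ⨆ x, ρ x)
    (C : Set (Tt kappa ordV))
    (hcomp : ∀ u ∈ C, ∀ u' ∈ C, leT ordV u u' ∨ leT ordV u' u)
    (hgood : ∀ u ∈ C, GOOD ordV X ρ u)
    (hunb : ∀ x : (kappa.ord.cof).ord.ToType, ∃ u ∈ C, x < u.1) : False := by
  classical
  choose pick hpickC hpickgt using hunb
  refine no_branch X hX hkappa ρ hsup
    (fun x => nodeA ordV ((pick x).2 ⟨x, hpickgt x⟩)) ?_ ?_ ?_
  · intro x
    exact ((hgood _ (hpickC x)).1 ⟨x, hpickgt x⟩).1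
  · intro x
    exact ((hgood _ (hpickC x)).1 ⟨x, hpickgt x⟩).2
  · intro x y hxy
    rcases hcomp _ (hpickC x) _ (hpickC y) with h | h
    · obtain ⟨hle, hagree⟩ := h
      have e1 : (pick x).2 ⟨x, hpickgt x⟩ =
          (pick y).2 ⟨x, lt_of_lt_of_le (hpickgt x) hle⟩ := hagree x (hpickgt x)
      show nodeA ordV ((pick x).2 ⟨x, hpickgt x⟩) ⊂ nodeA ordV ((pick y).2 ⟨y, hpickgt y⟩)
      rw [e1]
      exact (hgood _ (hpickC y)).2 ⟨x, _⟩ ⟨y, hpickgt y⟩ hxy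
    · obtain ⟨hle, hagree⟩ := h
      have e2 : (pick y).2 ⟨y, hpickgt y⟩ =
          (pick x).2 ⟨y, lt_of_lt_of_le (hpickgt y) hle⟩ := hagree y (hpickgt y)
      show nodeA ordV ((pick x).2 ⟨x, hpickgt x⟩) ⊂ nodeA ordV ((pick y).2 ⟨y, hpickgt y⟩)
      rw [e2]
      exact (hgood _ (hpickC x)).2 ⟨x, hpickgt x⟩ ⟨y, _⟩ hxy

lemma G0_cliquefree
    (hX : ¬∃ s : Set V, X.IsClique s ∧ #s = kappa) (hkappa : ℵ₀ ≤ kappa)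
    (hsup : kappa ≤ kappa.ord.cof ⊔ ⨆ x, ρ x)
    (hςlt : ∀ x, Order.succ (ρ x) < kappa) :
    ¬ ∃ s : Set (Idx ordV ρ), (G0 ordV X ρ).IsClique s ∧ #s = kappa := by
  classical
  rintro ⟨s, hscl, hsκ⟩
  have hκord : Order.IsSuccLimit kappa.ord := Cardinal.isSuccLimit_ord hkappa
  have hνinf : ℵ₀ ≤ kappa.ord.cof := Ordinal.aleph0_le_cof.2 hκord
  have hsne : s.Nonempty := by
    rw [← Set.nonempty_coe_sort, ← Cardinal.mk_ne_zero_iff, hsκ]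
    exact (lt_of_lt_of_le aleph0_pos hkappa).ne'
  by_cases hall : ∀ p ∈ s, ∀ q ∈ s, (p : Idx ordV ρ).1 = (q : Idx ordV ρ).1
  · obtain ⟨p0, hp0⟩ := hsne
    let F : ↥s → fib ordV ρ p0.1 := fun p =>
      cast (congrArg (fib ordV ρ) (hall _ p.2 _ hp0)) (p : Idx ordV ρ).2
    have hFinj : Function.Injective F := by
      intro p q h
      have h1 : (p : Idx ordV ρ).1 = (q : Idx ordV ρ).1 :=
        (hall _ p.2 _ hp0).trans (hall _ q.2 _ hp0).symm
      have h2 : HEq (p : Idx ordV ρ).2 (q : Idx ordV ρ).2 := by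
        have ha := cast_heq (congrArg (fib ordV ρ) (hall _ p.2 _ hp0)) (p : Idx ordV ρ).2
        have hb := cast_heq (congrArg (fib ordV ρ) (hall _ q.2 _ hp0)) (q : Idx ordV ρ).2
        exact ha.symm.trans ((heq_of_eq h).trans hb)
      apply Subtype.ext
      exact Sigma.ext h1 h2
    have hle : #↥s ≤ Order.succ (ρ p0.1.1) := by
      have := Cardinal.mk_le_of_injective hFinj
      rwa [Cardinal.mk_toType, Cardinal.card_ord] at this
    rw [hsκ] at hle
    exact absurd hle (not_le.2 (hςlt _))
  · push_neg at hall
    obtain ⟨pp, hpp, qq, hqq, hpqne⟩ := hall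
    set C : Set (Tt kappa ordV) := Sigma.fst '' s with hC
    have hrep : ∀ u ∈ C, ∃ p ∈ s, (p : Idx ordV ρ).1 = u := by
      rintro u ⟨p, hp, rfl⟩; exact ⟨p, hp, rfl⟩
    have hother : ∀ u, ∃ r ∈ s, (r : Idx ordV ρ).1 ≠ u := by
      intro u
      by_cases h : pp.1 = u
      · exact ⟨qq, hqq, by rw [← h]; exact fun he => hpqne he.symm⟩
      · exact ⟨pp, hpp, h⟩
    have hgoodC : ∀ u ∈ C, GOOD ordV X ρ u := by
      rintro u ⟨p, hp, rfl⟩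
      obtain ⟨r, hr, hru⟩ := hother p.1
      have hne' : p ≠ r := fun he => hru (by rw [he])
      have := hscl hp hr hne'
      exact (this.2.2 (fun he => hru he.symm)).1
    have hcompC : ∀ u ∈ C, ∀ u' ∈ C, leT ordV u u' ∨ leT ordV u' u := by
      rintro u ⟨p, hp, rfl⟩ u' ⟨q, hq, rfl⟩
      by_cases he : p.1 = q.1
      · rw [he]; exact Or.inl (leT_refl ordV _)
      · have hne' : p ≠ q := fun h => he (by rw [h])
        exact (hscl hp hq hne').2.1
    by_cases hub : ∀ x : (kappa.ord.cof).ord.ToType, ∃ u ∈ C, x < u.1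
    · exact chain_unbounded_false ordV X ρ hX hkappa hsup C hcompC hgoodC hub
    · push_neg at hub
      obtain ⟨ℓ, hℓ⟩ := hub
      let Ψ : ↥s → Σ y : {y : (kappa.ord.cof).ord.ToType // y ≤ ℓ},
          (Order.succ (ρ y.1)).ord.ToType := fun p =>
        ⟨⟨(p : Idx ordV ρ).1.1, hℓ _ ⟨p, p.2, rfl⟩⟩, (p : Idx ordV ρ).2⟩
      have hΨinj : Function.Injective Ψ := by
        intro p q h
        have h1 : (p : Idx ordV ρ).1.1 = (q : Idx ordV ρ).1.1 := by
          have := congrArg Sigma.fst h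
          exact Subtype.ext_iff.1 this
        have h1' : (p : Idx ordV ρ).1 = (q : Idx ordV ρ).1 := by
          rcases hcompC _ ⟨p, p.2, rfl⟩ _ ⟨q, q.2, rfl⟩ with hcc | hcc
          · exact leT_ext ordV hcc h1
          · exact (leT_ext ordV hcc h1.symm).symm
        have h2 := (Sigma.ext_iff.1 h).2
        apply Subtype.ext
        exact Sigma.ext h1' h2
      have hsum : #(Σ y : {y : (kappa.ord.cof).ord.ToType // y ≤ ℓ},
          (Order.succ (ρ y.1)).ord.ToType) < kappa := by
        rw [Cardinal.mk_sigma]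
        refine sum_lt_of_cof hkappa ?_ _ ?_
        · -- #{y // y ≤ ℓ} < cof κ.ord
          have h1 : #{y : (kappa.ord.cof).ord.ToType // y ≤ ℓ} ≤ #(Iio ℓ) + 1 := by
            have he : (setOf (· ≤ ℓ) : Set ((kappa.ord.cof).ord.ToType)) =
                insert ℓ (Iio ℓ) := by
              ext y; exact (le_iff_eq_or_lt (a := y) : _)
            calc #{y : (kappa.ord.cof).ord.ToType // y ≤ ℓ}
                = #(insert ℓ (Iio ℓ) : Set _) := by rw [← he]; rfl
              _ ≤ #(Iio ℓ) + 1 := Cardinal.mk_insert_le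
          refine lt_of_le_of_lt h1 ?_
          have h2 : #(Iio ℓ) < kappa.ord.cof := Cardinal.mk_Iio_ord_toType ℓ
          have : #(Iio ℓ) + 1 < kappa.ord.cof := by
            apply Cardinal.add_lt_of_lt hνinf h2
            exact lt_of_lt_of_le one_lt_aleph0 hνinf
          exact this
        · intro y
          have := hςlt y.1
          rwa [Cardinal.mk_toType, Cardinal.card_ord]
      have : #↥s < kappa := lt_of_le_of_lt (Cardinal.mk_le_of_injective hΨinj) hsum
      rw [hsκ] at this
      exact lt_irrefl _ this

end CliqueFree


lemma mk_Idx_le (ordV : V ≃ lam.ord.ToType)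
    (ρ : (kappa.ord.cof).ord.ToType → Cardinal.{u})
    (hsl : lam.IsStrongLimit) (hkappa : ℵ₀ ≤ kappa) (hkl : kappa ≤ lam)
    (hcf : kappa.ord.cof ≤ lam.ord.cof)
    (hρlt : ∀ x, Order.succ (ρ x) < kappa) :
    #(Idx ordV ρ) ≤ lam := by
  have hlaminf : ℵ₀ ≤ lam := hsl.aleph0_le
  have hmkO : #(lam.ord.ToType) = lam := by rw [Cardinal.mk_toType, Cardinal.card_ord]
  have hNode : #(Node ordV) ≤ lam := by
    rw [Node, Cardinal.mk_sigma]
    have hterm : ∀ b : lam.ord.ToType,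
        #{A : Set V // ∀ v ∈ A, ordV v < b} ≤ lam := by
      intro b
      have h1 : #{A : Set V // ∀ v ∈ A, ordV v < b} ≤
          (2 : Cardinal.{u}) ^ #({v : V | ordV v < b}) := by
        exact mk_subsets_le ({v : V | ordV v < b})
      refine le_trans h1 (le_of_lt (hsl.two_power_lt ?_))
      have h2 : #({v : V | ordV v < b}) = #(Iio b) := by
        refine Cardinal.mk_congr (Equiv.subtypeEquiv ordV (fun v => Iff.rfl))
      rw [h2]
      exact Cardinal.mk_Iio_ord_toType b
    calc Cardinal.sum (fun b : lam.ord.ToType => #{A : Set V // ∀ v ∈ A, ordV v < b})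
        ≤ Cardinal.sum (fun _ : lam.ord.ToType => lam) := Cardinal.sum_le_sum _ _ hterm
      _ = #(lam.ord.ToType) * lam := Cardinal.sum_const' _ _
      _ = lam := by rw [hmkO, Cardinal.mul_eq_self hlaminf]
  have hκord : Order.IsSuccLimit kappa.ord := Cardinal.isSuccLimit_ord hkappa
  have hνinf : ℵ₀ ≤ kappa.ord.cof := Ordinal.aleph0_le_cof.2 hκord
  have hνlam : kappa.ord.cof ≤ lam := le_trans (Ordinal.cof_ord_le kappa) hkl
  have hmkΛ : #((kappa.ord.cof).ord.ToType) = kappa.ord.cof := by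
    rw [Cardinal.mk_toType, Cardinal.card_ord]
  have hTt : #(Tt kappa ordV) ≤ lam := by
    rw [Tt, Cardinal.mk_sigma]
    have hterm : ∀ d : (kappa.ord.cof).ord.ToType,
        #({y : (kappa.ord.cof).ord.ToType // y < d} → Node ordV) ≤ lam := by
      intro d
      have h1 : #({y : (kappa.ord.cof).ord.ToType // y < d} → Node ordV) =
          #(Node ordV) ^ #({y : (kappa.ord.cof).ord.ToType // y < d}) :=
        (Cardinal.power_def _ _)
      rw [h1]
      have h2 : #({y : (kappa.ord.cof).ord.ToType // y < d}) < lam.ord.cof := by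
        refine lt_of_lt_of_le ?_ hcf
        exact Cardinal.mk_Iio_ord_toType d
      calc #(Node ordV) ^ #({y : (kappa.ord.cof).ord.ToType // y < d})
          ≤ lam ^ #({y : (kappa.ord.cof).ord.ToType // y < d}) :=
            Cardinal.power_le_power_right hNode
        _ ≤ lam := pow_le_of_lt_cof hsl h2
    calc Cardinal.sum (fun d : (kappa.ord.cof).ord.ToType =>
          #({y : (kappa.ord.cof).ord.ToType // y < d} → Node ordV))
        ≤ Cardinal.sum (fun _ : (kappa.ord.cof).ord.ToType => lam) :=
          Cardinal.sum_le_sum _ _ hterm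
      _ = #((kappa.ord.cof).ord.ToType) * lam := Cardinal.sum_const' _ _
      _ ≤ lam * lam := by
          refine mul_le_mul' ?_ le_rfl
          rw [hmkΛ]; exact hνlam
      _ = lam := Cardinal.mul_eq_self hlaminf
  rw [Idx, Cardinal.mk_sigma]
  have hterm : ∀ u : Tt kappa ordV, #(fib ordV ρ u) ≤ lam := by
    intro u
    have : #(fib ordV ρ u) = Order.succ (ρ u.1) := by
      rw [fib, Cardinal.mk_toType, Cardinal.card_ord]
    rw [this]
    exact le_trans (le_of_lt (hρlt u.1)) hkl
  calc Cardinal.sum (fun u : Tt kappa ordV => #(fib ordV ρ u))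
      ≤ Cardinal.sum (fun _ : Tt kappa ordV => lam) := Cardinal.sum_le_sum _ _ hterm
    _ = #(Tt kappa ordV) * lam := Cardinal.sum_const' _ _
    _ ≤ lam * lam := mul_le_mul' hTt le_rfl
    _ = lam := Cardinal.mul_eq_self hlaminf

section Core

variable (ordV : V ≃ lam.ord.ToType) (X : SimpleGraph V)
  (ρ : (kappa.ord.cof).ord.ToType → Cardinal.{u})

instance fibNonempty (u : Tt kappa ordV) : Nonempty (fib ordV ρ u) := by
  rw [fib, Ordinal.nonempty_toType_iff]
  intro h0
  rw [Cardinal.ord_eq_zero] at h0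
  exact absurd h0 (pos_iff_ne_zero.1 (lt_of_le_of_lt (zero_le : (0 : Cardinal) ≤ ρ u.1)
    (Order.lt_succ_of_not_isMax (not_isMax (ρ u.1)))))

/-- image of the gadget clique attached to a node of the tree -/
def aSet (F : Idx ordV ρ → V) (u : Tt kappa ordV) : Set V :=
  Set.range (fun pt : fib ordV ρ u => F ⟨u, pt⟩)

/-- the chain determined by a total node assignment, cut at `x` -/
def uuOf (g : (kappa.ord.cof).ord.ToType → Node ordV)
    (x : (kappa.ord.cof).ord.ToType) : Tt kappa ordV :=
  ⟨x, fun y => g y.1⟩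

/-- the clique of `X` accumulated by stage `x` -/
def UOf (g : (kappa.ord.cof).ord.ToType → Node ordV) (F : Idx ordV ρ → V)
    (x : (kappa.ord.cof).ord.ToType) : Set V :=
  ⋃ z : {z : (kappa.ord.cof).ord.ToType // z ≤ x}, aSet ordV ρ F (uuOf ordV g z.1)

lemma mk_aSet (F : Idx ordV ρ → V) (hF : Function.Injective F)
    (u : Tt kappa ordV) : #(aSet ordV ρ F u) = Order.succ (ρ u.1) := by
  rw [aSet, Cardinal.mk_range_eq]
  · rw [fib, Cardinal.mk_toType, Cardinal.card_ord]
  · intro pt pt' h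
    have h2 := hF h
    have h3 := (Sigma.ext_iff.1 h2).2
    exact eq_of_heq h3

lemma aSet_disj (F : Idx ordV ρ → V) (hF : Function.Injective F)
    {u u' : Tt kappa ordV} (h : u ≠ u') {v : V}
    (hv : v ∈ aSet ordV ρ F u) (hv' : v ∈ aSet ordV ρ F u') : False := by
  obtain ⟨pt, rfl⟩ := hv
  obtain ⟨pt', he⟩ := hv'
  have := hF he
  exact h ((Sigma.ext_iff.1 this).1.symm)

lemma exists_step
    (hsl : lam.IsStrongLimit) (hkappa : ℵ₀ ≤ kappa) (hkl : kappa ≤ lam)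
    (hcf : kappa.ord.cof ≤ lam.ord.cof)
    (hςlt : ∀ x, Order.succ (ρ x) < kappa)
    (hdisj : (kappa ≤ lam.ord.cof) ∨ (∀ x, lam.ord.cof < ρ x))
    (F : Idx ordV ρ → V) (hF : Function.Injective F)
    (g : (kappa.ord.cof).ord.ToType → Node ordV)
    (x : (kappa.ord.cof).ord.ToType) :
    ∃ b : lam.ord.ToType, (∀ y (hy : y < x), (g y).1 < b) ∧
      ρ x ≤ #((UOf ordV ρ g F x ∩ {v | ordV v < b} : Set V)) ∧
      ordV (F ⟨uuOf ordV g x, Classical.arbitrary _⟩) < b := by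
  classical
  have hlaminf : ℵ₀ ≤ lam := hsl.aleph0_le
  have hlamord : Order.IsSuccLimit lam.ord := Cardinal.isSuccLimit_ord hlaminf
  have hκord : Order.IsSuccLimit kappa.ord := Cardinal.isSuccLimit_ord hkappa
  have hνinf : ℵ₀ ≤ kappa.ord.cof := Ordinal.aleph0_le_cof.2 hκord
  have hμinf : ℵ₀ ≤ lam.ord.cof := Ordinal.aleph0_le_cof.2 hlamord
  -- bound for previous nodes
  obtain ⟨b₁, hb₁⟩ : ∃ b : lam.ord.ToType, ∀ y : {y // y < x}, (g y.1).1 < b := by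
    refine exists_bound ?_ (fun y : {y : (kappa.ord.cof).ord.ToType // y < x} => (g y.1).1)
    exact lt_of_lt_of_le (Cardinal.mk_Iio_ord_toType x) hcf
  -- point bound
  obtain ⟨b₃, hb₃⟩ := exists_gt hlamord (ordV (F ⟨uuOf ordV g x, Classical.arbitrary _⟩))
  -- capture bound
  have hUlow : Order.succ (ρ x) ≤ #(UOf ordV ρ g F x) := by
    have h1 : aSet ordV ρ F (uuOf ordV g x) ⊆ UOf ordV ρ g F x := by
      intro v hv
      exact Set.mem_iUnion.2 ⟨⟨x, le_rfl⟩, hv⟩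
    calc Order.succ (ρ x) = #(aSet ordV ρ F (uuOf ordV g x)) :=
          (mk_aSet ordV ρ F hF (uuOf ordV g x)).symm
      _ ≤ _ := Cardinal.mk_le_mk_of_subset h1
  obtain ⟨b₂, hb₂⟩ : ∃ b : lam.ord.ToType,
      ρ x ≤ #((UOf ordV ρ g F x ∩ {v | ordV v < b} : Set V)) := by
    rcases hdisj with hκμ | hbig
    · -- bounded case
      have hUsmall : #(UOf ordV ρ g F x) < lam.ord.cof := by
        have h1 : #(UOf ordV ρ g F x) ≤
            Cardinal.sum (fun z : {z : (kappa.ord.cof).ord.ToType // z ≤ x} =>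
              #(aSet ordV ρ F (uuOf ordV g z.1))) := by
          rw [UOf]
          exact Cardinal.mk_iUnion_le_sum_mk
        have h2 : Cardinal.sum (fun z : {z : (kappa.ord.cof).ord.ToType // z ≤ x} =>
            #(aSet ordV ρ F (uuOf ordV g z.1))) < kappa := by
          refine sum_lt_of_cof hkappa ?_ _ ?_
          · -- #{z // z ≤ x} < cof κ.ord
            have he : (setOf (· ≤ x) : Set ((kappa.ord.cof).ord.ToType)) =
                insert x (Iio x) := by
              ext y; exact (le_iff_eq_or_lt (a := y) : _)
            have h3 : #{z : (kappa.ord.cof).ord.ToType // z ≤ x} ≤ #(Iio x) + 1 := by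
              calc #{z : (kappa.ord.cof).ord.ToType // z ≤ x}
                  = #(insert x (Iio x) : Set _) := by rw [← he]; rfl
                _ ≤ #(Iio x) + 1 := Cardinal.mk_insert_le
            refine lt_of_le_of_lt h3 ?_
            exact Cardinal.add_lt_of_lt hνinf (Cardinal.mk_Iio_ord_toType x)
              (lt_of_lt_of_le one_lt_aleph0 hνinf)
          · intro z
            rw [mk_aSet ordV ρ F hF]
            exact hςlt _
        exact lt_of_le_of_lt h1 (lt_of_lt_of_le h2 hκμ)
      obtain ⟨b₂, hb₂⟩ := exists_bound hUsmall
        (fun v : ↥(UOf ordV ρ g F x) => ordV v.1)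
      refine ⟨b₂, ?_⟩
      have hsub : UOf ordV ρ g F x ⊆ {v | ordV v < b₂} := fun v hv => hb₂ ⟨v, hv⟩
      rw [Set.inter_eq_left.2 hsub]
      exact le_trans (le_of_lt (Order.lt_succ_of_not_isMax (not_isMax (ρ x)))) hUlow
    · -- unbounded case: counting over a cofinal set
      by_contra hcon
      push_neg at hcon
      haveI hwo : IsWellOrder lam.ord.ToType (· < ·) := isWellOrder_lt
      obtain ⟨S, hSunb, hSmk⟩ :=
        Order.exists_cof_eq lam.ord.ToType
      rw [← Ordinal.cof_type, Ordinal.type_toType] at hSmk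
      have hcover : UOf ordV ρ g F x ⊆
          ⋃ b : ↥S, (UOf ordV ρ g F x ∩ {v | ordV v < b.1}) := by
        intro v hv
        obtain ⟨a, ha⟩ := exists_gt hlamord (ordV v)
        obtain ⟨b, hbS, hba⟩ := hSunb a
        refine Set.mem_iUnion.2 ⟨⟨b, hbS⟩, hv, ?_⟩
        exact lt_of_lt_of_le ha hba
      have h1 : #(UOf ordV ρ g F x) ≤
          Cardinal.sum (fun b : ↥S => #((UOf ordV ρ g F x ∩ {v | ordV v < b.1} : Set V))) :=
        le_trans (Cardinal.mk_le_mk_of_subset hcover) Cardinal.mk_iUnion_le_sum_mk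
      have h2 : Cardinal.sum
          (fun b : ↥S => #((UOf ordV ρ g F x ∩ {v | ordV v < b.1} : Set V))) ≤
          lam.ord.cof * ρ x := by
        calc Cardinal.sum (fun b : ↥S => #((UOf ordV ρ g F x ∩ {v | ordV v < b.1} : Set V)))
            ≤ Cardinal.sum (fun _ : ↥S => ρ x) :=
              Cardinal.sum_le_sum _ _ (fun b => le_of_lt (hcon b.1))
          _ = #↥S * ρ x := Cardinal.sum_const' _ _
          _ = lam.ord.cof * ρ x := by rw [hSmk]
      have h3 : lam.ord.cof * ρ x = ρ x := by
        refine Cardinal.mul_eq_right (le_trans hμinf (le_of_lt (hbig x)))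
          (le_of_lt (hbig x)) ?_
        exact pos_iff_ne_zero.1 (lt_of_lt_of_le aleph0_pos hμinf)
      have : Order.succ (ρ x) ≤ ρ x := by
        refine le_trans hUlow (le_trans h1 ?_)
        rw [← h3]; exact h2
      exact absurd this (not_le.2 (Order.lt_succ_of_not_isMax (not_isMax (ρ x))))
  refine ⟨max (max b₁ b₂) b₃, ?_, ?_, ?_⟩
  · intro y hy
    exact lt_of_lt_of_le (hb₁ ⟨y, hy⟩) (le_trans (le_max_left _ _) (le_max_left _ _))
  · refine le_trans hb₂ (Cardinal.mk_le_mk_of_subset ?_)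
    intro v hv
    exact ⟨hv.1, lt_of_lt_of_le hv.2 (le_trans (le_max_right b₁ b₂) (le_max_left _ _))⟩
  · exact lt_of_lt_of_le hb₃ (le_max_right _ _)

lemma core (hsl : lam.IsStrongLimit) (hkappa : ℵ₀ ≤ kappa) (hkl : kappa ≤ lam)
    (hcf : kappa.ord.cof ≤ lam.ord.cof)
    (hX : ¬∃ s : Set V, X.IsClique s ∧ #s = kappa)
    (hςlt : ∀ x, Order.succ (ρ x) < kappa)
    (hsup : kappa ≤ kappa.ord.cof ⊔ ⨆ x, ρ x)
    (hdisj : (kappa ≤ lam.ord.cof) ∨ (∀ x, lam.ord.cof < ρ x))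
    (F : Idx ordV ρ → V) (hF : Function.Injective F)
    (hadj : ∀ p q : Idx ordV ρ, (G0 ordV X ρ).Adj p q → X.Adj (F p) (F q)) :
    False := by
  classical
  have hlaminf : ℵ₀ ≤ lam := hsl.aleph0_le
  obtain ⟨b0⟩ : Nonempty lam.ord.ToType := by
    rw [Ordinal.nonempty_toType_iff]
    intro h0
    rw [Cardinal.ord_eq_zero] at h0
    rw [h0] at hlaminf
    exact absurd hlaminf (by simp [aleph0_pos.ne'])
  set junk : Node ordV := ⟨b0, ⟨∅, fun v hv => absurd hv (Set.notMem_empty v)⟩⟩ with hjunk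
  set wf := (IsWellFounded.wf (α := (kappa.ord.cof).ord.ToType) (r := (· < ·))) with hwf
  set pg : ∀ x : (kappa.ord.cof).ord.ToType,
      (∀ y, y < x → Node ordV) → ((kappa.ord.cof).ord.ToType → Node ordV) :=
    fun x prev => (fun y => if h : y < x then prev y h else junk) with hpg
  set body : ∀ x : (kappa.ord.cof).ord.ToType,
      (∀ y, y < x → Node ordV) → Node ordV := fun x prev =>
    ⟨Classical.choose (exists_step ordV ρ hsl hkappa hkl hcf hςlt hdisj F hF (pg x prev) x),
     ⟨UOf ordV ρ (pg x prev) F x ∩ {v | ordV v <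
        Classical.choose (exists_step ordV ρ hsl hkappa hkl hcf hςlt hdisj F hF (pg x prev) x)},
      fun v hv => hv.2⟩⟩ with hbody
  set n : (kappa.ord.cof).ord.ToType → Node ordV := fun x => wf.fix body x with hn
  have hfix : ∀ x, n x = body x (fun y _ => n y) := fun x => wf.fix_eq body x
  -- agreement of the cut-off assignment with n
  have hgagree : ∀ x z, z ≤ x → uuOf ordV (pg x (fun y _ => n y)) z = uuOf ordV n z := by
    intro x z hz
    rw [uuOf, uuOf]
    congr 1
    funext y
    have : y.1 < x := lt_of_lt_of_le y.2 hz
    simp only [hpg, dif_pos this]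
  have hUagree : ∀ x, UOf ordV ρ (pg x (fun y _ => n y)) F x = UOf ordV ρ n F x := by
    intro x
    rw [UOf, UOf]
    exact Set.iUnion_congr (fun z => congrArg (aSet ordV ρ F) (hgagree x z.1 z.2))
  -- the specification of each step
  have hspec : ∀ x, (∀ y (_ : y < x), (n y).1 < (n x).1) ∧
      ρ x ≤ #(nodeA ordV (n x)) ∧
      nodeA ordV (n x) = UOf ordV ρ n F x ∩ {v | ordV v < (n x).1} ∧
      ∃ w, w ∈ nodeA ordV (n x) ∧ w ∈ aSet ordV ρ F (uuOf ordV n x) := by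
    intro x
    obtain ⟨h1, h2, h3⟩ := Classical.choose_spec
      (exists_step ordV ρ hsl hkappa hkl hcf hςlt hdisj F hF (pg x (fun y _ => n y)) x)
    have hfst : (n x).1 = Classical.choose
        (exists_step ordV ρ hsl hkappa hkl hcf hςlt hdisj F hF (pg x (fun y _ => n y)) x) := by
      rw [hfix x]
    have hA : nodeA ordV (n x) = UOf ordV ρ n F x ∩ {v | ordV v < (n x).1} := by
      conv_lhs => rw [hfix x]
      show UOf ordV ρ (pg x (fun y _ => n y)) F x ∩ _ = _
      rw [← hUagree x, hfst]
    refine ⟨?_, ?_, hA, ?_⟩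
    · intro y hy
      have := h1 y hy
      rw [hpg] at this
      simp only [dif_pos hy] at this
      rwa [← hfst] at this
    · rw [hA, hfst, ← hUagree x]
      exact h2
    · refine ⟨F ⟨uuOf ordV (pg x (fun y _ => n y)) x, Classical.arbitrary _⟩, ?_, ?_⟩
      · rw [hA]
        refine ⟨?_, ?_⟩
        · rw [← hUagree x]
          exact Set.mem_iUnion.2 ⟨⟨x, le_rfl⟩, ⟨Classical.arbitrary _, rfl⟩⟩
        · show ordV _ < (n x).1
          rw [hfst]
          exact h3
      · rw [← hgagree x x le_rfl]
        exact ⟨Classical.arbitrary _, rfl⟩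
  -- monotonicity of U
  have hUmono : ∀ x y, x ≤ y → UOf ordV ρ n F x ⊆ UOf ordV ρ n F y := by
    intro x y hxy v hv
    obtain ⟨z, hz⟩ := Set.mem_iUnion.1 hv
    exact Set.mem_iUnion.2 ⟨⟨z.1, le_trans z.2 hxy⟩, hz⟩
  -- strict growth of the cliques
  have pairlt : ∀ x y, x < y → nodeA ordV (n x) ⊂ nodeA ordV (n y) := by
    intro x y hxy
    obtain ⟨hs1x, hs2x, hs3x, hs4x⟩ := hspec x
    obtain ⟨hs1y, hs2y, hs3y, hs4y⟩ := hspec y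
    constructor
    · rw [hs3x, hs3y]
      intro v hv
      refine ⟨hUmono x y (le_of_lt hxy) hv.1, ?_⟩
      exact lt_trans hv.2 (hs1y x hxy)
    · intro hsub
      obtain ⟨w, hw1, hw2⟩ := hs4y
      have hwx : w ∈ nodeA ordV (n x) := hsub hw1
      rw [hs3x] at hwx
      obtain ⟨z, hz⟩ := Set.mem_iUnion.1 hwx.1
      refine aSet_disj ordV ρ F hF ?_ hz hw2
      intro he
      have hzy : z.1 = y := congrArg Sigma.fst he
      rw [← hzy] at hxy
      exact absurd (lt_of_le_of_lt z.2 hxy) (lt_irrefl _)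
  -- cliqueness of accumulated sets, given goodness below
  have hUclique : ∀ x, (∀ z, z ≤ x → GOOD ordV X ρ (uuOf ordV n z)) →
      X.IsClique (UOf ordV ρ n F x) := by
    intro x hgood v hv w hw hvw
    obtain ⟨z1, hz1⟩ := Set.mem_iUnion.1 hv
    obtain ⟨z2, hz2⟩ := Set.mem_iUnion.1 hw
    obtain ⟨pt1, rfl⟩ := hz1
    obtain ⟨pt2, rfl⟩ := hz2
    have hpq : (⟨uuOf ordV n z1.1, pt1⟩ : Idx ordV ρ) ≠ ⟨uuOf ordV n z2.1, pt2⟩ := by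
      intro h; exact hvw (congrArg F h)
    refine hadj _ _ ⟨hpq, ?_, fun _ => ⟨hgood z1.1 z1.2, hgood z2.1 z2.2⟩⟩
    rcases le_total z1.1 z2.1 with hle | hle
    · exact Or.inl ⟨hle, fun y hy => rfl⟩
    · exact Or.inr ⟨hle, fun y hy => rfl⟩
  -- goodness of all stages
  have goodAll : ∀ x, GOOD ordV X ρ (uuOf ordV n x) := by
    intro x
    refine wf.induction (C := fun x => GOOD ordV X ρ (uuOf ordV n x)) x ?_
    intro x ih
    constructor
    · intro y
      constructor
      · have h3 := (hspec y.1).2.2.1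
        have hcl : X.IsClique (UOf ordV ρ n F y.1) :=
          hUclique y.1 (fun z hz => ih z (lt_of_le_of_lt hz y.2))
        show X.IsClique (nodeA ordV (n y.1))
        rw [h3]
        exact hcl.subset Set.inter_subset_left
      · exact (hspec y.1).2.1
    · intro y z hyz
      exact pairlt y.1 z.1 hyz
  -- the final contradiction
  refine no_branch X hX hkappa ρ hsup (fun x => nodeA ordV (n x)) ?_ ?_ ?_
  · intro x
    have h3 := (hspec x).2.2.1
    show X.IsClique (nodeA ordV (n x))
    rw [h3]
    exact (hUclique x (fun z _ => goodAll z)).subset Set.inter_subset_left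
  · intro x
    exact (hspec x).2.1
  · exact pairlt

lemma Y_cliquefree
    (hX : ¬∃ s : Set V, X.IsClique s ∧ #s = kappa) (hkappa : ℵ₀ ≤ kappa)
    (hsup : kappa ≤ kappa.ord.cof ⊔ ⨆ x, ρ x)
    (hςlt : ∀ x, Order.succ (ρ x) < kappa)
    (ι : Idx ordV ρ ↪ V) :
    ¬ ∃ s : Set V, ((G0 ordV X ρ).map ι).IsClique s ∧ #s = kappa := by
  rintro ⟨s, hscl, hsκ⟩
  have hnt : Nontrivial ↥s := by
    rw [← Cardinal.one_lt_iff_nontrivial, hsκ]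
    exact lt_of_lt_of_le one_lt_aleph0 hkappa
  have hrange : s ⊆ Set.range ι := by
    intro v hv
    obtain ⟨⟨w, hw⟩, hne⟩ := exists_ne (⟨v, hv⟩ : ↥s)
    have hwv : w ≠ v := fun h => hne (Subtype.ext h)
    have hadj := hscl hw hv hwv
    rw [SimpleGraph.map_adj] at hadj
    obtain ⟨a, b, -, -, hb⟩ := hadj
    exact ⟨b, hb⟩
  refine G0_cliquefree ordV X ρ hX hkappa hsup hςlt ⟨ι ⁻¹' s, ?_, ?_⟩
  · intro p hp q hq hpq
    have hne : ι p ≠ ι q := fun h => hpq (ι.injective h)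
    have hadj := hscl hp hq hne
    rw [SimpleGraph.map_adj] at hadj
    obtain ⟨a, b, hab, ha, hb⟩ := hadj
    rwa [ι.injective ha, ι.injective hb] at hab
  · rw [Cardinal.mk_preimage_of_injective_of_subset_range ι s ι.injective hrange, hsκ]

end Core
end Main

theorem main_result (lam kappa : Cardinal.{u}) (hsl : lam.IsStrongLimit)
    (hsing : lam.ord.cof < lam) (hkappa : ℵ₀ ≤ kappa) (hkl : kappa ≤ lam)
    (hcf : kappa.ord.cof ≤ lam.ord.cof) :
    ¬ ∃ X : SimpleGraph (Quotient.out lam),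
      (¬ ∃ s : Set (Quotient.out lam), X.IsClique s ∧ #s = kappa) ∧
      ∀ Y : SimpleGraph (Quotient.out lam),
        (¬ ∃ s : Set (Quotient.out lam), Y.IsClique s ∧ #s = kappa) →
        ∃ f : Quotient.out lam → Quotient.out lam, Function.Injective f ∧
          ∀ a b, Y.Adj a b → X.Adj (f a) (f b) := by
  rintro ⟨X, hX, hU⟩
  obtain ⟨ordV⟩ : Nonempty (Quotient.out lam ≃ lam.ord.ToType) := by
    refine Cardinal.eq.1 ?_
    rw [Cardinal.mk_out, Cardinal.mk_toType, Cardinal.card_ord]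
  obtain ⟨ρ, hρlt, hςlt, hsup, hdisj⟩ := exists_rho lam kappa hkappa hcf
  have hIdx : #(Idx ordV ρ) ≤ lam := mk_Idx_le ordV ρ hsl hkappa hkl hcf hςlt
  obtain ⟨ι⟩ : Nonempty (Idx ordV ρ ↪ Quotient.out lam) := by
    rw [← Cardinal.le_def, Cardinal.mk_out]
    exact hIdx
  obtain ⟨f, hfinj, hfadj⟩ := hU ((G0 ordV X ρ).map ι)
    (Y_cliquefree ordV X ρ hX hkappa hsup hςlt ι)
  refine core ordV X ρ hsl hkappa hkl hcf hX hςlt hsup hdisj (f ∘ ι)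
    (hfinj.comp ι.injective) ?_
  intro p q h
  exact hfadj (ι p) (ι q) (by rw [SimpleGraph.map_adj]; exact ⟨p, q, h, rfl, rfl⟩)

end Stmt4Aux

open Cardinal

/-- If `λ` is a singular strong limit cardinal, `κ ≤ λ` is infinite and
`cf(κ) ≤ cf(λ)`, then there is no weakly `(λ,κ)`-universal graph: no graph on a
vertex set of size `λ` with no clique of size `κ` into which every such graph
injectively and edge-preservingly embeds. -/
theorem stmt4 (lam kappa : Cardinal) (hsl : lam.IsStrongLimit)
    (hsing : lam.ord.cof < lam) (hkappa : ℵ₀ ≤ kappa) (hkl : kappa ≤ lam)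
    (hcf : kappa.ord.cof ≤ lam.ord.cof) :
    ¬ ∃ X : SimpleGraph (Quotient.out lam),
      (¬ ∃ s : Set (Quotient.out lam), X.IsClique s ∧ #s = kappa) ∧
      ∀ Y : SimpleGraph (Quotient.out lam),
        (¬ ∃ s : Set (Quotient.out lam), Y.IsClique s ∧ #s = kappa) →
        ∃ f : Quotient.out lam → Quotient.out lam, Function.Injective f ∧
          ∀ a b, Y.Adj a b → X.Adj (f a) (f b) := by
  exact Stmt4Aux.main_result lam kappa hsl hsing hkappa hkl hcf
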